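/- (Asymptotic variance of MPP̂_u.) Let U₁, U₂, … be i.i.d. pairs Uᵢ = (Xᵢ,Yᵢ) with Xᵢ ~ P and Yᵢ ~ Q. Then n · Var(MPP̂_u) → σ²_{H₁*} as n → ∞; that is, the rescaled variance of the MPP estimator converges to 4 ξ, where ξ := E[H*₁₂ H*₁₃] − (E[H*₁₂])² is the variance of the conditional expectation Var_U( E_{U'}[h(U,U')] ). -/

import Mathlib

open MeasureTheory ProbabilityTheory Filter Finset Topology

/-- `Hstar k (x,y) (x',y') = k(x,x') - k(x,y') - k(y,x')`. -/
noncomputable def Hstar {𝒳 : Type*} (k : 𝒳 → 𝒳 → ℝ) (u v : 𝒳 × 𝒳) : ℝ :=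
  k u.1 v.1 - k u.1 v.2 - k u.2 v.1

/-- The U-statistic estimator `MPP̂_u = (1/(n(n-1))) ∑_{i≠j} H*ᵢⱼ`. -/
noncomputable def MPPhat {𝒳 : Type*} (k : 𝒳 → 𝒳 → ℝ) (n : ℕ) (u : Fin n → 𝒳 × 𝒳) : ℝ :=
  ((n : ℝ) * ((n : ℝ) - 1))⁻¹ *
    ∑ i : Fin n, ∑ j ∈ Finset.univ.erase i, Hstar k (u i) (u j)

/-- `σ²_{H₁*} = 4 (E[H*₁₂ H*₁₃] - (E[H*₁₂])²) = 4 ξ`, expectations over i.i.d.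
pairs with common law `m`, written as iterated integrals. -/
noncomputable def sigmaSqPop {𝒳 : Type*} [MeasurableSpace 𝒳]
    (m : Measure (𝒳 × 𝒳)) (k : 𝒳 → 𝒳 → ℝ) : ℝ :=
  4 * ((∫ u, (∫ v, (∫ w, Hstar k u v * Hstar k u w ∂m) ∂m) ∂m)
    - (∫ u, (∫ v, Hstar k u v ∂m) ∂m) ^ 2)

set_option linter.unusedSectionVars false

section AuxMPP

variable {𝒳 Ω₀ : Type*} [MeasurableSpace 𝒳] [MeasurableSpace Ω₀]
  (μ : Measure Ω₀) [IsProbabilityMeasure μ]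
  (m : Measure (𝒳 × 𝒳)) [IsProbabilityMeasure m]
  (U : ℕ → Ω₀ → 𝒳 × 𝒳) (hU : ∀ i, Measurable (U i))
  (hindep : iIndepFun U μ)
  (hlaw : ∀ i, Measure.map (U i) μ = m)

lemma auxMPP_integrable {α : Type*} [MeasurableSpace α] (τ : Measure α) [IsFiniteMeasure τ]
    {f : α → ℝ} (hf : Measurable f) (c : ℝ) (h : ∀ a, |f a| ≤ c) : Integrable f τ :=
  ⟨hf.aestronglyMeasurable,
    HasFiniteIntegral.of_bounded (C := c) (ae_of_all _ (by simpa [Real.norm_eq_abs] using h))⟩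

include hU hindep hlaw in
lemma auxMPP_pair_map {i j : ℕ} (hij : i ≠ j) :
    μ.map (fun ω => (U i ω, U j ω)) = m.prod m := by
  rw [(indepFun_iff_map_prod_eq_prod_map_map (hU i).aemeasurable (hU j).aemeasurable).mp
    (hindep.indepFun hij), hlaw i, hlaw j]

include hU hindep hlaw in
lemma auxMPP_pair {i j : ℕ} (hij : i ≠ j)
    (F : (𝒳 × 𝒳) → (𝒳 × 𝒳) → ℝ)
    (hF : Measurable (fun p : (𝒳 × 𝒳) × (𝒳 × 𝒳) => F p.1 p.2))
    (c : ℝ) (hFb : ∀ u v, |F u v| ≤ c) :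
    ∫ ω, F (U i ω) (U j ω) ∂μ = ∫ u, ∫ v, F u v ∂m ∂m := by
  have h1 : ∫ ω, F (U i ω) (U j ω) ∂μ = ∫ p, F p.1 p.2 ∂(m.prod m) := by
    rw [← auxMPP_pair_map μ m U hU hindep hlaw hij,
      integral_map ((hU i).prodMk (hU j)).aemeasurable hF.aestronglyMeasurable]
  rw [h1, integral_prod _ (auxMPP_integrable _ hF c (fun p => hFb p.1 p.2))]

include hU hindep hlaw in
lemma auxMPP_triple_map {a b c : ℕ} (hab : a ≠ b) (hac : a ≠ c) (hbc : b ≠ c) :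
    μ.map (fun ω => (U a ω, (U b ω, U c ω))) = m.prod (m.prod m) := by
  have hI : IndepFun (U a) (fun ω => (U b ω, U c ω)) μ :=
    (hindep.indepFun_prodMk hU b c a hab.symm hac.symm).symm
  rw [(indepFun_iff_map_prod_eq_prod_map_map (hU a).aemeasurable
      ((hU b).prodMk (hU c)).aemeasurable).mp hI, hlaw a,
    auxMPP_pair_map μ m U hU hindep hlaw hbc]

include hU hindep hlaw in
lemma auxMPP_triple {a b c : ℕ} (hab : a ≠ b) (hac : a ≠ c) (hbc : b ≠ c)
    (F : (𝒳 × 𝒳) → (𝒳 × 𝒳) → (𝒳 × 𝒳) → ℝ)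
    (hF : Measurable (fun p : (𝒳 × 𝒳) × ((𝒳 × 𝒳) × (𝒳 × 𝒳)) => F p.1 p.2.1 p.2.2))
    (cc : ℝ) (hFb : ∀ u v w, |F u v w| ≤ cc) :
    ∫ ω, F (U a ω) (U b ω) (U c ω) ∂μ = ∫ u, ∫ v, ∫ w, F u v w ∂m ∂m ∂m := by
  have h1 : ∫ ω, F (U a ω) (U b ω) (U c ω) ∂μ
      = ∫ p, F p.1 p.2.1 p.2.2 ∂(m.prod (m.prod m)) := by
    rw [← auxMPP_triple_map μ m U hU hindep hlaw hab hac hbc,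
      integral_map ((hU a).prodMk ((hU b).prodMk (hU c))).aemeasurable
        hF.aestronglyMeasurable]
  rw [h1, integral_prod _ (auxMPP_integrable _ hF cc (fun p => hFb p.1 p.2.1 p.2.2))]
  refine integral_congr_ae (ae_of_all _ fun u => ?_)
  exact integral_prod _ (auxMPP_integrable _
    (hF.comp (measurable_const.prodMk measurable_id)) cc (fun p => hFb u p.1 p.2))

include hU hindep hlaw in
lemma auxMPP_mul_indep {i j p q : ℕ} (hip : i ≠ p) (hiq : i ≠ q) (hjp : j ≠ p) (hjq : j ≠ q)
    (F : (𝒳 × 𝒳) → (𝒳 × 𝒳) → ℝ)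
    (hF : Measurable (fun r : (𝒳 × 𝒳) × (𝒳 × 𝒳) => F r.1 r.2))
    (c : ℝ) (hFb : ∀ u v, |F u v| ≤ c) :
    ∫ ω, F (U i ω) (U j ω) * F (U p ω) (U q ω) ∂μ
      = (∫ ω, F (U i ω) (U j ω) ∂μ) * ∫ ω, F (U p ω) (U q ω) ∂μ := by
  have hI : IndepFun (fun ω => F (U i ω) (U j ω)) (fun ω => F (U p ω) (U q ω)) μ :=
    (hindep.indepFun_prodMk_prodMk hU i j p q hip hiq hjp hjq).comp hF hF
  have h1 : Integrable (fun ω => F (U i ω) (U j ω)) μ :=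
    auxMPP_integrable μ (hF.comp ((hU i).prodMk (hU j))) c (fun ω => hFb _ _)
  have h2 : Integrable (fun ω => F (U p ω) (U q ω)) μ :=
    auxMPP_integrable μ (hF.comp ((hU p).prodMk (hU q))) c (fun ω => hFb _ _)
  simpa using hI.integral_mul_eq_mul_integral h1.aestronglyMeasurable h2.aestronglyMeasurable

end AuxMPP

set_option maxHeartbeats 1000000 in
/-- Asymptotic variance of `MPP̂_u`: `n · Var(MPP̂_u) → σ²_{H₁*} = 4ξ` as
`n → ∞`. -/
theorem mpphat_asymptotic_variance {𝒳 Ω₀ : Type*} [MeasurableSpace 𝒳] [MeasurableSpace Ω₀]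
    (μ : Measure Ω₀) [IsProbabilityMeasure μ]
    (P Q : Measure 𝒳) [IsProbabilityMeasure P] [IsProbabilityMeasure Q]
    (m : Measure (𝒳 × 𝒳)) [IsProbabilityMeasure m]
    (k : 𝒳 → 𝒳 → ℝ) (ν : ℝ)
    (hk : Measurable (Function.uncurry k))
    (hsymm : ∀ x x', k x x' = k x' x)
    (hbound : ∀ x x', |k x x'| ≤ ν)
    (U : ℕ → Ω₀ → 𝒳 × 𝒳)
    (hU : ∀ i, Measurable (U i))
    (hindep : iIndepFun U μ)
    (hlaw : ∀ i, Measure.map (U i) μ = m)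
    (hmP : m.map Prod.fst = P) (hmQ : m.map Prod.snd = Q) :
    Tendsto
      (fun n : ℕ =>
        (n : ℝ) * variance (fun ω => MPPhat k n (fun i => U i.val ω)) μ)
      atTop (𝓝 (sigmaSqPop m k)) := by
  classical
  -- nonemptiness and nonnegativity of ν
  have hne : Nonempty (𝒳 × 𝒳) := by
    by_contra h
    rw [not_nonempty_iff] at h
    have h1 : m Set.univ = 1 := measure_univ
    rw [Set.univ_eq_empty_iff.mpr h, measure_empty] at h1
    exact one_ne_zero h1.symm
  obtain ⟨⟨x0, y0⟩⟩ := hne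
  have hν : 0 ≤ ν := le_trans (abs_nonneg _) (hbound x0 x0)
  -- basic facts about Hstar
  have hHb : ∀ u v : 𝒳 × 𝒳, |Hstar k u v| ≤ 3 * ν := by
    intro u v
    have h1 := abs_le.mp (hbound u.1 v.1)
    have h2 := abs_le.mp (hbound u.1 v.2)
    have h3 := abs_le.mp (hbound u.2 v.1)
    unfold Hstar
    rw [abs_le]
    constructor <;> [nlinarith [h1.1, h2.2, h3.2]; nlinarith [h1.2, h2.1, h3.1]]
  have hHsymm : ∀ u v : 𝒳 × 𝒳, Hstar k u v = Hstar k v u := by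
    intro u v
    unfold Hstar
    rw [hsymm v.1 u.1, hsymm v.1 u.2, hsymm v.2 u.1]
    ring
  have hHmeas : Measurable (fun p : (𝒳 × 𝒳) × (𝒳 × 𝒳) => Hstar k p.1 p.2) := by
    unfold Hstar
    exact ((hk.comp (measurable_fst.fst.prodMk measurable_snd.fst)).sub
      (hk.comp (measurable_fst.fst.prodMk measurable_snd.snd))).sub
      (hk.comp (measurable_fst.snd.prodMk measurable_snd.fst))

  -- expectations
  set θ := ∫ u, (∫ v, Hstar k u v ∂m) ∂m with hθdef
  set CC := ∫ u, (∫ v, (∫ w, Hstar k u v * Hstar k u w ∂m) ∂m) ∂m with hCCdef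
  set A := ∫ u, (∫ v, Hstar k u v * Hstar k u v ∂m) ∂m with hAdef
  have hb2 : ∀ (u v u' v' : 𝒳 × 𝒳), |Hstar k u v * Hstar k u' v'| ≤ 3 * ν * (3 * ν) := by
    intro u v u' v'
    rw [abs_mul]
    exact mul_le_mul (hHb u v) (hHb u' v') (abs_nonneg _) (by linarith)
  have hEθ : ∀ i j : ℕ, i ≠ j → ∫ ω, Hstar k (U i ω) (U j ω) ∂μ = θ :=
    fun i j hij => auxMPP_pair μ m U hU hindep hlaw hij _ hHmeas (3 * ν) hHb
  have hEC : ∀ a b c : ℕ, a ≠ b → a ≠ c → b ≠ c →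
      ∫ ω, Hstar k (U a ω) (U b ω) * Hstar k (U a ω) (U c ω) ∂μ = CC := by
    intro a b c hab hac hbc
    exact auxMPP_triple μ m U hU hindep hlaw hab hac hbc
      (fun u v w => Hstar k u v * Hstar k u w)
      ((hHmeas.comp (measurable_fst.prodMk measurable_snd.fst)).mul
        (hHmeas.comp (measurable_fst.prodMk measurable_snd.snd)))
      (3 * ν * (3 * ν)) (fun u v w => hb2 _ _ _ _)
  have hEA : ∀ i j : ℕ, i ≠ j →
      ∫ ω, Hstar k (U i ω) (U j ω) * Hstar k (U i ω) (U j ω) ∂μ = A :=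
    fun i j hij => auxMPP_pair μ m U hU hindep hlaw hij
      (fun u v => Hstar k u v * Hstar k u v)
      (hHmeas.mul hHmeas) (3 * ν * (3 * ν)) (fun u v => hb2 _ _ _ _)
  have hE0 : ∀ i j p q : ℕ, i ≠ j → p ≠ q → i ≠ p → i ≠ q → j ≠ p → j ≠ q →
      ∫ ω, Hstar k (U i ω) (U j ω) * Hstar k (U p ω) (U q ω) ∂μ = θ ^ 2 := by
    intro i j p q hij hpq hip hiq hjp hjq
    rw [auxMPP_mul_indep μ m U hU hindep hlaw hip hiq hjp hjq _ hHmeas (3 * ν) hHb,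
      hEθ i j hij, hEθ p q hpq, sq]
  have hErev : ∀ i j : ℕ, i ≠ j →
      ∫ ω, Hstar k (U i ω) (U j ω) * Hstar k (U j ω) (U i ω) ∂μ = A := by
    intro i j hij
    rw [show (fun ω => Hstar k (U i ω) (U j ω) * Hstar k (U j ω) (U i ω))
        = (fun ω => Hstar k (U i ω) (U j ω) * Hstar k (U i ω) (U j ω)) from
      funext fun ω => by rw [hHsymm (U j ω) (U i ω)]]
    exact hEA i j hij
  have hC2 : ∀ i j p : ℕ, i ≠ j → p ≠ j → i ≠ p →
      ∫ ω, Hstar k (U i ω) (U j ω) * Hstar k (U p ω) (U j ω) ∂μ = CC := by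
    intro i j p hij hpj hip
    rw [show (fun ω => Hstar k (U i ω) (U j ω) * Hstar k (U p ω) (U j ω))
        = (fun ω => Hstar k (U j ω) (U i ω) * Hstar k (U j ω) (U p ω)) from
      funext fun ω => by rw [hHsymm (U i ω), hHsymm (U p ω)]]
    exact hEC j i p hij.symm hpj.symm hip
  have hC3 : ∀ i j p : ℕ, i ≠ j → i ≠ p → j ≠ p →
      ∫ ω, Hstar k (U i ω) (U j ω) * Hstar k (U p ω) (U i ω) ∂μ = CC := by
    intro i j p hij hip hjp
    rw [show (fun ω => Hstar k (U i ω) (U j ω) * Hstar k (U p ω) (U i ω))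
        = (fun ω => Hstar k (U i ω) (U j ω) * Hstar k (U i ω) (U p ω)) from
      funext fun ω => by rw [hHsymm (U p ω)]]
    exact hEC i j p hij hip hjp
  have hC4 : ∀ i j p : ℕ, i ≠ j → j ≠ p → i ≠ p →
      ∫ ω, Hstar k (U i ω) (U j ω) * Hstar k (U j ω) (U p ω) ∂μ = CC := by
    intro i j p hij hjp hip
    rw [show (fun ω => Hstar k (U i ω) (U j ω) * Hstar k (U j ω) (U p ω))
        = (fun ω => Hstar k (U j ω) (U i ω) * Hstar k (U j ω) (U p ω)) from
      funext fun ω => by rw [hHsymm (U i ω)]]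
    exact hEC j i p hij.symm hjp hip
  -- the key per-n identity
  have key : ∀ n : ℕ, 2 ≤ n →
      (n : ℝ) * variance (fun ω => MPPhat k n (fun i => U i.val ω)) μ
        = 2 * (A - θ ^ 2) * ((n : ℝ) - 1)⁻¹
          + 4 * (CC - θ ^ 2) * (1 - ((n : ℝ) - 1)⁻¹) := by
    intro n hn
    have hnR : (2 : ℝ) ≤ (n : ℝ) := by exact_mod_cast hn
    set S : Ω₀ → ℝ :=
      fun ω => ∑ i : Fin n, ∑ j ∈ Finset.univ.erase i, Hstar k (U i.val ω) (U j.val ω) with hS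
    have hvne : ∀ a b : Fin n, a ≠ b → (a : ℕ) ≠ (b : ℕ) :=
      fun a b h hv => h (Fin.val_injective hv)
    have hΓm : ∀ a b : Fin n, Measurable (fun ω => Hstar k (U a.val ω) (U b.val ω)) :=
      fun a b => hHmeas.comp ((hU a.val).prodMk (hU b.val))
    have hΓint : ∀ a b : Fin n, Integrable (fun ω => Hstar k (U a.val ω) (U b.val ω)) μ :=
      fun a b => auxMPP_integrable μ (hΓm a b) (3 * ν) (fun ω => hHb _ _)
    have hΓΓint : ∀ a b c d : Fin n,
        Integrable (fun ω => Hstar k (U a.val ω) (U b.val ω)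
          * Hstar k (U c.val ω) (U d.val ω)) μ :=
      fun a b c d => auxMPP_integrable μ ((hΓm a b).mul (hΓm c d)) (3 * ν * (3 * ν))
        (fun ω => hb2 _ _ _ _)
    have hSm : Measurable S := by
      apply Finset.measurable_sum
      intro i _
      exact Finset.measurable_sum _ (fun j _ => hΓm i j)
    have hSb : ∀ ω, ‖S ω‖ ≤ (n : ℝ) * ((n : ℝ) * (3 * ν)) := by
      intro ω
      rw [Real.norm_eq_abs]
      have hrow : ∀ i : Fin n,
          |∑ j ∈ Finset.univ.erase i, Hstar k (U i.val ω) (U j.val ω)| ≤ (n : ℝ) * (3 * ν) := by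
        intro i
        calc |∑ j ∈ Finset.univ.erase i, Hstar k (U i.val ω) (U j.val ω)|
            ≤ ∑ j ∈ Finset.univ.erase i, |Hstar k (U i.val ω) (U j.val ω)| :=
              Finset.abs_sum_le_sum_abs _ _
          _ ≤ ∑ _j ∈ Finset.univ.erase i, (3 * ν) := Finset.sum_le_sum fun j _ => hHb _ _
          _ = ((Finset.univ.erase i).card : ℝ) * (3 * ν) := by
              rw [Finset.sum_const, nsmul_eq_mul]
          _ ≤ (n : ℝ) * (3 * ν) := by
              have hc : ((Finset.univ.erase i).card : ℝ) ≤ (n : ℝ) := by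
                have h := Finset.card_le_univ (Finset.univ.erase i)
                rw [Fintype.card_fin] at h
                exact_mod_cast h
              exact mul_le_mul_of_nonneg_right hc (by linarith)
      calc |S ω| ≤ ∑ i : Fin n, |∑ j ∈ Finset.univ.erase i, Hstar k (U i.val ω) (U j.val ω)| :=
            Finset.abs_sum_le_sum_abs _ _
        _ ≤ ∑ _i : Fin n, (n : ℝ) * (3 * ν) := Finset.sum_le_sum fun i _ => hrow i
        _ = (n : ℝ) * ((n : ℝ) * (3 * ν)) := by
            rw [Finset.sum_const, nsmul_eq_mul, Finset.card_univ, Fintype.card_fin]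
    have hSL2 : MemLp S 2 μ :=
      MemLp.of_bound hSm.aestronglyMeasurable _ (ae_of_all _ hSb)
    have hcard1 : ∀ i : Fin n, (((Finset.univ : Finset (Fin n)).erase i).card : ℝ)
        = (n : ℝ) - 1 := by
      intro i
      rw [Finset.card_erase_of_mem (Finset.mem_univ i), Finset.card_univ, Fintype.card_fin,
        Nat.cast_sub (by omega : 1 ≤ n), Nat.cast_one]
    -- first moment
    have hES : ∫ ω, S ω ∂μ = ((n : ℝ) * ((n : ℝ) - 1)) * θ := by
      simp only [hS]
      rw [integral_finset_sum _ (fun i _ => integrable_finset_sum _ (fun j _ => hΓint i j))]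
      have hrow : ∀ i : Fin n,
          ∫ ω, ∑ j ∈ Finset.univ.erase i, Hstar k (U i.val ω) (U j.val ω) ∂μ
          = ((n : ℝ) - 1) * θ := by
        intro i
        rw [integral_finset_sum _ (fun j _ => hΓint i j),
          Finset.sum_congr rfl (fun j hj =>
            hEθ i.val j.val (hvne i j (Finset.ne_of_mem_erase hj).symm)),
          Finset.sum_const, nsmul_eq_mul, hcard1 i]
      rw [Finset.sum_congr rfl (fun i _ => hrow i), Finset.sum_const, nsmul_eq_mul,
        Finset.card_univ, Fintype.card_fin]
      ring
    -- second moment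
    have hESq : ∫ ω, S ω * S ω ∂μ = ((n : ℝ) * ((n : ℝ) - 1)) *
        (2 * A + 4 * ((n : ℝ) - 2) * CC + ((n : ℝ) - 2) * ((n : ℝ) - 3) * θ ^ 2) := by
      have hexp : ∫ ω, S ω * S ω ∂μ = ∫ ω, (∑ i : Fin n, ∑ j ∈ Finset.univ.erase i,
          ∑ p : Fin n, ∑ q ∈ Finset.univ.erase p,
          Hstar k (U i.val ω) (U j.val ω) * Hstar k (U p.val ω) (U q.val ω)) ∂μ := by
        refine integral_congr_ae (ae_of_all _ fun ω => ?_)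
        simp only [hS, Finset.sum_mul, Finset.mul_sum]
        exact Finset.sum_congr rfl fun a _ => Finset.sum_congr rfl fun b _ =>
          Finset.sum_congr rfl fun c _ => Finset.sum_congr rfl fun d _ => mul_comm _ _
      rw [hexp]
      have I0 : ∀ a b p : Fin n, Integrable (fun ω => ∑ q ∈ Finset.univ.erase p,
          Hstar k (U a.val ω) (U b.val ω) * Hstar k (U p.val ω) (U q.val ω)) μ :=
        fun a b p => integrable_finset_sum _ fun q _ => hΓΓint a b p q
      have I1 : ∀ a b : Fin n, Integrable (fun ω => ∑ p : Fin n, ∑ q ∈ Finset.univ.erase p,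
          Hstar k (U a.val ω) (U b.val ω) * Hstar k (U p.val ω) (U q.val ω)) μ :=
        fun a b => integrable_finset_sum _ fun p _ => I0 a b p
      have I2 : ∀ a : Fin n, Integrable (fun ω => ∑ j ∈ Finset.univ.erase a, ∑ p : Fin n,
          ∑ q ∈ Finset.univ.erase p,
          Hstar k (U a.val ω) (U j.val ω) * Hstar k (U p.val ω) (U q.val ω)) μ :=
        fun a => integrable_finset_sum _ fun j _ => I1 a j
      rw [integral_finset_sum _ (fun i _ => I2 i)]
      rw [Finset.sum_congr rfl (fun i _ =>
        integral_finset_sum _ (fun j (_ : j ∈ Finset.univ.erase i) => I1 i j))]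
      rw [Finset.sum_congr rfl (fun i _ => Finset.sum_congr rfl (fun j _ =>
        integral_finset_sum _ (fun p (_ : p ∈ (Finset.univ : Finset (Fin n))) => I0 i j p)))]
      rw [Finset.sum_congr rfl (fun i _ => Finset.sum_congr rfl (fun j _ =>
        Finset.sum_congr rfl (fun p _ =>
          integral_finset_sum _ (fun q (_ : q ∈ Finset.univ.erase p) => hΓΓint i j p q))))]
      -- now compute the inner triple sum for each (i, j)
      have hT : ∀ i j : Fin n, j ∈ Finset.univ.erase i →
          ∑ p : Fin n, ∑ q ∈ Finset.univ.erase p,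
              (∫ ω, Hstar k (U i.val ω) (U j.val ω) * Hstar k (U p.val ω) (U q.val ω) ∂μ)
          = 2 * A + 4 * ((n : ℝ) - 2) * CC + ((n : ℝ) - 2) * ((n : ℝ) - 3) * θ ^ 2 := by
        intro i j hjmem
        have hji : j ≠ i := Finset.ne_of_mem_erase hjmem
        have hij : i ≠ j := hji.symm
        have hijv : (i : ℕ) ≠ (j : ℕ) := hvne i j hij
        set R : Finset (Fin n) := (Finset.univ.erase i).erase j with hR
        have hmemR : ∀ a : Fin n, a ∈ R ↔ a ≠ j ∧ a ≠ i := by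
          intro a
          simp [hR, Finset.mem_erase]
        have hiR : i ∉ R := by simp [hmemR]
        have hjR : j ∉ R := by simp [hmemR]
        have hiJR : i ∉ insert j R := by simp [Finset.mem_insert, hij, hiR]
        have d2 : insert j R = Finset.univ.erase i := Finset.insert_erase hjmem
        have d1 : insert i (insert j R) = (Finset.univ : Finset (Fin n)) := by
          rw [d2]; exact Finset.insert_erase (Finset.mem_univ i)
        have d3 : insert i R = Finset.univ.erase j := by
          ext a
          simp only [Finset.mem_insert, hmemR, Finset.mem_erase, Finset.mem_univ, and_true]
          constructor
          · rintro (rfl | ⟨h1, _⟩)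
            · exact hij
            · exact h1
          · intro h1
            by_cases h2 : a = i
            · exact Or.inl h2
            · exact Or.inr ⟨h1, h2⟩
        have d4 : ∀ p ∈ R, (Finset.univ.erase p : Finset (Fin n))
            = insert i (insert j (R.erase p)) := by
          intro p hp
          have hpj : p ≠ j := ((hmemR p).mp hp).1
          have hpi : p ≠ i := ((hmemR p).mp hp).2
          ext a
          simp only [Finset.mem_erase, Finset.mem_univ, and_true, Finset.mem_insert, hmemR]
          constructor
          · intro hap
            by_cases h1 : a = i
            · exact Or.inl h1
            by_cases h2 : a = j
            · exact Or.inr (Or.inl h2)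
            · exact Or.inr (Or.inr ⟨hap, h2, h1⟩)
          · rintro (rfl | rfl | ⟨h, _⟩)
            · exact hpi.symm
            · exact hpj.symm
            · exact h
        have hcardRN : R.card = n - 2 := by
          rw [hR, Finset.card_erase_of_mem hjmem,
            Finset.card_erase_of_mem (Finset.mem_univ i), Finset.card_univ, Fintype.card_fin]
          omega
        have hcardR : (R.card : ℝ) = (n : ℝ) - 2 := by
          rw [hcardRN, Nat.cast_sub hn]; norm_num
        have hFi : ∑ q ∈ Finset.univ.erase i,
            (∫ ω, Hstar k (U i.val ω) (U j.val ω) * Hstar k (U i.val ω) (U q.val ω) ∂μ)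
            = A + ((n : ℝ) - 2) * CC := by
          rw [← d2, Finset.sum_insert hjR, hEA i.val j.val hijv,
            Finset.sum_congr rfl (fun q hq => hEC i.val j.val q.val hijv
              (hvne i q (((hmemR q).mp hq).2).symm) (hvne j q (((hmemR q).mp hq).1).symm)),
            Finset.sum_const, nsmul_eq_mul, hcardR]
        have hFj : ∑ q ∈ Finset.univ.erase j,
            (∫ ω, Hstar k (U i.val ω) (U j.val ω) * Hstar k (U j.val ω) (U q.val ω) ∂μ)
            = A + ((n : ℝ) - 2) * CC := by
          rw [← d3, Finset.sum_insert hiR, hErev i.val j.val hijv,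
            Finset.sum_congr rfl (fun q hq => hC4 i.val j.val q.val hijv
              (hvne j q (((hmemR q).mp hq).1).symm) (hvne i q (((hmemR q).mp hq).2).symm)),
            Finset.sum_const, nsmul_eq_mul, hcardR]
        have hFp : ∀ p ∈ R, ∑ q ∈ Finset.univ.erase p,
            (∫ ω, Hstar k (U i.val ω) (U j.val ω) * Hstar k (U p.val ω) (U q.val ω) ∂μ)
            = CC + (CC + ((n : ℝ) - 3) * θ ^ 2) := by
          intro p hp
          have hpj : p ≠ j := ((hmemR p).mp hp).1
          have hpi : p ≠ i := ((hmemR p).mp hp).2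
          have hn3 : 3 ≤ n := by
            have := Finset.card_pos.mpr ⟨p, hp⟩
            omega
          have hiJRp : i ∉ insert j (R.erase p) := by
            simp [Finset.mem_insert, hij, Finset.mem_erase, hiR]
          have hjRp : j ∉ R.erase p := by simp [Finset.mem_erase, hjR]
          have hcardRe : ((R.erase p).card : ℝ) = (n : ℝ) - 3 := by
            rw [Finset.card_erase_of_mem hp, hcardRN,
              (by omega : n - 2 - 1 = n - 3), Nat.cast_sub hn3]
            norm_num
          rw [d4 p hp, Finset.sum_insert hiJRp, Finset.sum_insert hjRp,
            hC3 i.val j.val p.val hijv (hvne i p hpi.symm) (hvne j p hpj.symm),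
            hC2 i.val j.val p.val hijv (hvne p j hpj) (hvne i p hpi.symm),
            Finset.sum_congr rfl (fun q hq => by
              have hqp : q ≠ p := (Finset.mem_erase.mp hq).1
              have hqR := (Finset.mem_erase.mp hq).2
              have hqj : q ≠ j := ((hmemR q).mp hqR).1
              have hqi : q ≠ i := ((hmemR q).mp hqR).2
              exact hE0 i.val j.val p.val q.val hijv (hvne p q hqp.symm)
                (hvne i p hpi.symm) (hvne i q hqi.symm)
                (hvne j p hpj.symm) (hvne j q hqj.symm)),
            Finset.sum_const, nsmul_eq_mul, hcardRe]
        nth_rewrite 1 [← d1]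
        rw [Finset.sum_insert hiJR, Finset.sum_insert hjR, hFi, hFj,
          Finset.sum_congr rfl hFp, Finset.sum_const, nsmul_eq_mul, hcardR]
        ring
      rw [Finset.sum_congr rfl (fun i _ => Finset.sum_congr rfl (fun j hj => hT i j hj)),
        Finset.sum_congr rfl (fun i _ => by
          rw [Finset.sum_const, nsmul_eq_mul, hcard1 i]),
        Finset.sum_const, nsmul_eq_mul, Finset.card_univ, Fintype.card_fin]
      ring
    -- variance computation
    have hsq : S ^ 2 = fun ω => S ω * S ω := by
      funext ω
      simp [pow_two]
    have hvarS : variance S μ = ((n : ℝ) * ((n : ℝ) - 1)) *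
        (2 * A + 4 * ((n : ℝ) - 2) * CC + ((n : ℝ) - 2) * ((n : ℝ) - 3) * θ ^ 2)
        - (((n : ℝ) * ((n : ℝ) - 1)) * θ) ^ 2 := by
      rw [variance_eq_sub hSL2, hsq, hESq, hES]
    have hM : (fun ω => MPPhat k n (fun i => U i.val ω))
        = fun ω => ((n : ℝ) * ((n : ℝ) - 1))⁻¹ * S ω := by
      funext ω
      simp only [MPPhat, hS]
    rw [hM, variance_const_mul, hvarS]
    have h1ne : (n : ℝ) - 1 ≠ 0 := by nlinarith
    have hnne : (n : ℝ) ≠ 0 := by nlinarith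
    field_simp
    ring
  -- pass to the limit
  have hσ : sigmaSqPop m k = 4 * (CC - θ ^ 2) := by
    rw [sigmaSqPop, ← hθdef, ← hCCdef]
  rw [hσ]
  have h0 : Tendsto (fun n : ℕ => ((n : ℝ) - 1)⁻¹) atTop (𝓝 0) := by
    apply Filter.Tendsto.inv_tendsto_atTop
    exact tendsto_atTop_add_const_right _ (-1) tendsto_natCast_atTop_atTop
  have hlim : Tendsto (fun n : ℕ => 2 * (A - θ ^ 2) * ((n : ℝ) - 1)⁻¹
      + 4 * (CC - θ ^ 2) * (1 - ((n : ℝ) - 1)⁻¹)) atTop (𝓝 (4 * (CC - θ ^ 2))) := by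
    have h1 : Tendsto (fun n : ℕ => (1 : ℝ) - ((n : ℝ) - 1)⁻¹) atTop (𝓝 (1 - 0)) :=
      tendsto_const_nhds.sub h0
    have h2 := (Filter.Tendsto.const_mul (2 * (A - θ ^ 2)) h0).add
      (Filter.Tendsto.const_mul (4 * (CC - θ ^ 2)) h1)
    simpa using h2
  refine hlim.congr' ?_
  filter_upwards [eventually_ge_atTop 2] with n hn
  exact (key n hn).symm
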